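/- arXiv:1602.04336 — 2 statements merged into one kernel-verified Lean document; each statement's English description precedes it below -/
import Mathlib

section
/- Suppose {λ_k}_{k∈ℤ^d} ⊂ ℝ^d is such that there exist constants 0 < A ≤ B < ∞ with A‖f‖₂² ≤ Σ_{k∈ℤ^d} |f̂(λ_k)|² ≤ B‖f‖₂² for all f ∈ 𝒰_d. Let {μ_k}_{k∈ℤ^d} ⊂ ℝ^d and M > 0 be such that ‖λ_k − μ_k‖_∞ < M for all k ∈ ℤ^d. Then for every ρ > 0 and every f ∈ 𝒰_d, Σ_{k∈ℤ^d} |f̂(μ_k)|² ≤ B(1 + √B')² ‖f‖₂², where B' = (B/A)(e^{M²ρ²d} − 1)(e^{π²d/ρ²} − 1). -/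
open MeasureTheory Real Complex

noncomputable section

/-- The Fourier transform of `f : ℝ^d → ℂ`: `f̂(γ) = ∫ f(x) e^{-2πi x·γ} dx`. -/
def fourierT {d : ℕ} (f : EuclideanSpace ℝ (Fin d) → ℂ) (γ : EuclideanSpace ℝ (Fin d)) : ℂ :=
  ∫ x : EuclideanSpace ℝ (Fin d),
    f x * Complex.exp ((-(2 * Real.pi * (inner ℝ x γ : ℝ)) : ℝ) * Complex.I)

namespace PFFB

open Function SchwartzMap

variable {d : ℕ}

abbrev Ed (d : ℕ) := EuclideanSpace ℝ (Fin d)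

def Q (d : ℕ) : Set (Ed d) := {x | ∀ i, |x i| ≤ 1 / 2}

lemma norm_le_sqrt_of_memQ {x : Ed d} (hx : x ∈ Q d) : ‖x‖ ≤ Real.sqrt d := by
  rw [EuclideanSpace.norm_eq]
  apply Real.sqrt_le_sqrt
  have : ∀ i : Fin d, ‖x i‖ ^ 2 ≤ 1 := by
    intro i
    have h1 : ‖x i‖ ≤ 1 := by
      have := hx i
      rw [Real.norm_eq_abs]
      linarith
    calc ‖x i‖ ^ 2 ≤ 1 ^ 2 := pow_le_pow_left₀ (norm_nonneg _) h1 2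
    _ = 1 := one_pow 2
  calc ∑ i, ‖x i‖ ^ 2 ≤ ∑ _i : Fin d, (1 : ℝ) := Finset.sum_le_sum fun i _ => this i
  _ = d := by simp

lemma isCompact_Q : IsCompact (Q d) := by
  apply Metric.isCompact_of_isClosed_isBounded
  · have : Q d = ⋂ i : Fin d, {x : Ed d | |x i| ≤ 1 / 2} := by
      ext x; simp [Q, Set.mem_iInter]
    rw [this]
    refine isClosed_iInter fun i => ?_
    have hc : Continuous fun x : Ed d => |x i| :=
      (EuclideanSpace.proj (𝕜 := ℝ) i).continuous.abs
    exact isClosed_le hc continuous_const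
  · apply Bornology.IsBounded.subset (Metric.isBounded_closedBall (x := (0 : Ed d)) (r := Real.sqrt d))
    intro x hx
    simpa [Metric.mem_closedBall, dist_zero_right] using norm_le_sqrt_of_memQ hx

lemma hasCompactSupport_of_suppQ {V : Type*} [NormedAddCommGroup V] {g : Ed d → V}
    (h : support g ⊆ Q d) : HasCompactSupport g :=
  HasCompactSupport.of_support_subset_isCompact isCompact_Q h

lemma integrable_of_suppQ {V : Type*} [NormedAddCommGroup V] {g : Ed d → V}
    (hg : Continuous g) (h : support g ⊆ Q d) : Integrable g :=
  hg.integrable_of_hasCompactSupport (hasCompactSupport_of_suppQ h)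

def mulCoordCLM (d : ℕ) (j : Fin d) : 𝓢(Ed d, ℂ) →L[ℝ] 𝓢(Ed d, ℂ) :=
  SchwartzMap.bilinLeftCLM (ContinuousLinearMap.mul ℝ ℂ)
    ((Complex.ofRealCLM.comp (EuclideanSpace.proj j)).hasTemperateGrowth)

def hMap (f : 𝓢(Ed d, ℂ)) : (m : ℕ) → (Fin m → Fin d) → 𝓢(Ed d, ℂ)
  | 0, _ => f
  | (m + 1), a => mulCoordCLM d (a 0) (hMap f m (fun i => a i.succ))

lemma hMap_apply (f : 𝓢(Ed d, ℂ)) : ∀ (m : ℕ) (a : Fin m → Fin d) (x : Ed d),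
    hMap f m a x = (∏ i, ((x (a i) : ℝ) : ℂ)) * f x := by
  intro m
  induction m with
  | zero => intro a x; simp [hMap]
  | succ m ih =>
    intro a x
    have h1 : hMap f (m + 1) a x = (hMap f m (fun i => a i.succ) x) * ((x (a 0) : ℝ) : ℂ) := rfl
    rw [h1, ih, Fin.prod_univ_succ]
    ring

lemma support_hMap (f : 𝓢(Ed d, ℂ)) (m : ℕ) (a : Fin m → Fin d) :
    support ⇑(hMap f m a) ⊆ support ⇑f := by
  intro x hx
  rw [mem_support] at hx ⊢
  rw [hMap_apply] at hx
  exact right_ne_zero_of_mul hx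

lemma norm_hMap (f : 𝓢(Ed d, ℂ)) (m : ℕ) (a : Fin m → Fin d) (x : Ed d) :
    ‖hMap f m a x‖ = (∏ i, |x (a i)|) * ‖f x‖ := by
  rw [hMap_apply, norm_mul, norm_prod]
  congr 1
  exact Finset.prod_congr rfl fun i _ => by
    rw [Complex.norm_real, Real.norm_eq_abs]

lemma integrable_normsq_of_suppQ (g : Ed d → ℂ) (hg : Continuous g) (h : support g ⊆ Q d) :
    Integrable (fun x => ‖g x‖ ^ 2) := by
  apply integrable_of_suppQ ((hg.norm).pow 2)
  intro x hx
  apply h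
  rw [mem_support] at hx ⊢
  intro h0
  exact hx (by simp [h0])

lemma hMap_l2 (f : 𝓢(Ed d, ℂ)) (hf : support ⇑f ⊆ Q d) (m : ℕ) (a : Fin m → Fin d) :
    ∫ x, ‖hMap f m a x‖ ^ 2 ≤ (1 / 4) ^ m * ∫ x : Ed d, ‖f x‖ ^ 2 := by
  have hint1 : Integrable (fun x => ‖hMap f m a x‖ ^ 2) :=
    integrable_normsq_of_suppQ _ (hMap f m a).continuous ((support_hMap f m a).trans hf)
  have hint2 : Integrable (fun x : Ed d => (1 / 4 : ℝ) ^ m * ‖f x‖ ^ 2) :=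
    (integrable_normsq_of_suppQ _ f.continuous hf).const_mul _
  have hpt : ∀ x, ‖hMap f m a x‖ ^ 2 ≤ (1 / 4 : ℝ) ^ m * ‖f x‖ ^ 2 := by
    intro x
    by_cases hx : f x = 0
    · rw [norm_hMap, hx]
      simp
    · have hxQ : x ∈ Q d := hf (mem_support.mpr hx)
      rw [norm_hMap, mul_pow]
      have hprod : (∏ i, |x (a i)|) ≤ (1 / 2 : ℝ) ^ m := by
        calc (∏ i, |x (a i)|) ≤ ∏ _i : Fin m, (1 / 2 : ℝ) :=
              Finset.prod_le_prod (fun i _ => abs_nonneg _) (fun i _ => hxQ (a i))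
        _ = (1 / 2 : ℝ) ^ m := by rw [Finset.prod_const, Finset.card_univ, Fintype.card_fin]
      have h2 : (∏ i, |x (a i)|) ^ 2 ≤ ((1 / 2 : ℝ) ^ m) ^ 2 :=
        pow_le_pow_left₀ (Finset.prod_nonneg fun i _ => abs_nonneg _) hprod 2
      have h3 : ((1 / 2 : ℝ) ^ m) ^ 2 = (1 / 4 : ℝ) ^ m := by
        rw [← pow_mul, pow_mul']
        norm_num
      calc (∏ i, |x (a i)|) ^ 2 * ‖f x‖ ^ 2 ≤ ((1 / 2 : ℝ) ^ m) ^ 2 * ‖f x‖ ^ 2 :=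
            mul_le_mul_of_nonneg_right h2 (sq_nonneg _)
      _ = (1 / 4 : ℝ) ^ m * ‖f x‖ ^ 2 := by rw [h3]
  calc ∫ x, ‖hMap f m a x‖ ^ 2 ≤ ∫ x : Ed d, (1 / 4 : ℝ) ^ m * ‖f x‖ ^ 2 :=
        integral_mono hint1 hint2 hpt
  _ = (1 / 4) ^ m * ∫ x : Ed d, ‖f x‖ ^ 2 := by rw [integral_const_mul]

lemma frame_summable {lam : (Fin d → ℤ) → Ed d} {A : ℝ} (hA : 0 < A)
    (hlow : ∀ g : 𝓢(Ed d, ℂ), support ⇑g ⊆ Q d →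
      A * ∫ x : Ed d, ‖g x‖ ^ 2 ≤ ∑' k : Fin d → ℤ, ‖fourierT (⇑g) (lam k)‖ ^ 2)
    (g : 𝓢(Ed d, ℂ)) (hg : support ⇑g ⊆ Q d) :
    Summable fun k : Fin d → ℤ => ‖fourierT (⇑g) (lam k)‖ ^ 2 := by
  by_contra hns
  have h0 : ∑' k : Fin d → ℤ, ‖fourierT (⇑g) (lam k)‖ ^ 2 = 0 :=
    tsum_eq_zero_of_not_summable hns
  have h1 := hlow g hg
  rw [h0] at h1
  have hint : Integrable (fun x => ‖g x‖ ^ 2) := integrable_normsq_of_suppQ _ g.continuous hg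
  have hnn : 0 ≤ ∫ x : Ed d, ‖g x‖ ^ 2 := integral_nonneg fun x => sq_nonneg _
  have hz : ∫ x : Ed d, ‖g x‖ ^ 2 = 0 := le_antisymm (by nlinarith) hnn
  have hae := (integral_eq_zero_iff_of_nonneg (fun x => sq_nonneg _) hint).mp hz
  have hg0 : ∀ x, g x = 0 := by
    have hcont : Continuous fun x : Ed d => ‖g x‖ ^ 2 := (g.continuous.norm).pow 2
    have heq : (fun x : Ed d => ‖g x‖ ^ 2) = fun _ => 0 :=
      (hcont.ae_eq_iff_eq volume continuous_const).mp hae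
    intro x
    have hx := congrFun heq x
    simpa using hx
  apply hns
  have heq2 : (fun k : Fin d → ℤ => ‖fourierT (⇑g) (lam k)‖ ^ 2) = fun _ => 0 := by
    funext k
    have : fourierT (⇑g) (lam k) = 0 := by
      unfold fourierT
      simp [hg0]
    simp [this]
  rw [heq2]
  exact summable_zero

lemma minkowski {ι κ : Type*} [Countable ι] (T : ι → κ → ℂ) (S : ι → ℝ)
    (hT : ∀ j, Summable fun k => ‖T j k‖ ^ 2)
    (hS : ∀ j, ∑' k, ‖T j k‖ ^ 2 ≤ S j ^ 2)
    (hSnn : ∀ j, 0 ≤ S j) (hβ : Summable S) :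
    Summable (fun k => ‖∑' j, T j k‖ ^ 2) ∧
      ∑' k, ‖∑' j, T j k‖ ^ 2 ≤ (∑' j, S j) ^ 2 := by
  classical
  have key : ∀ F : Finset κ, ∑ k ∈ F, ‖∑' j, T j k‖ ^ 2 ≤ (∑' j, S j) ^ 2 := by
    intro F
    set V : ι → EuclideanSpace ℂ ↥F := fun j => WithLp.toLp 2 (fun k : ↥F => T j k.1) with hVdef
    have hVnorm : ∀ j, ‖V j‖ ≤ S j := by
      intro j
      rw [EuclideanSpace.norm_eq]
      have h1 : ∑ k : ↥F, ‖T j k.1‖ ^ 2 ≤ S j ^ 2 := by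
        calc ∑ k : ↥F, ‖T j k.1‖ ^ 2 = ∑ k ∈ F, ‖T j k‖ ^ 2 :=
              Finset.sum_coe_sort F (fun k => ‖T j k‖ ^ 2)
        _ ≤ ∑' k, ‖T j k‖ ^ 2 := Summable.sum_le_tsum F (fun _ _ => sq_nonneg _) (hT j)
        _ ≤ S j ^ 2 := hS j
      calc Real.sqrt (∑ k : ↥F, ‖V j k‖ ^ 2) ≤ Real.sqrt (S j ^ 2) := Real.sqrt_le_sqrt h1
      _ = S j := Real.sqrt_sq (hSnn j)
    have hVnormsum : Summable fun j => ‖V j‖ :=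
      hβ.of_nonneg_of_le (fun j => norm_nonneg _) hVnorm
    have hVs : Summable V := Summable.of_norm hVnormsum
    set W : EuclideanSpace ℂ ↥F := ∑' j, V j with hWdef
    have hW : ∀ k : ↥F, W k = ∑' j, T j k.1 := fun k =>
      (EuclideanSpace.proj (𝕜 := ℂ) k).map_tsum hVs
    have hnormW : ‖W‖ ≤ ∑' j, S j :=
      (norm_tsum_le_tsum_norm hVnormsum).trans (Summable.tsum_le_tsum hVnorm hVnormsum hβ)
    have e1 : ∑ k ∈ F, ‖∑' j, T j k‖ ^ 2 = ∑ k : ↥F, ‖W k‖ ^ 2 := by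
      rw [← Finset.sum_coe_sort F (fun k => ‖∑' j, T j k‖ ^ 2)]
      exact Finset.sum_congr rfl fun k _ => by rw [hW k]
    have e2 : (∑ k : ↥F, ‖W k‖ ^ 2) = ‖W‖ ^ 2 := by
      rw [EuclideanSpace.norm_eq, Real.sq_sqrt (Finset.sum_nonneg fun _ _ => sq_nonneg _)]
    rw [e1, e2]
    exact pow_le_pow_left₀ (norm_nonneg _) hnormW 2
  exact ⟨summable_of_sum_le (fun k => sq_nonneg _) key,
    Summable.tsum_le_of_sum_le (summable_of_sum_le (fun k => sq_nonneg _) key) key⟩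

lemma real_exp_tsum (t : ℝ) : Real.exp t = ∑' n : ℕ, t ^ n / n.factorial := by
  rw [Real.exp_eq_exp_ℝ, NormedSpace.exp_eq_tsum_div]

lemma real_exp_tail (t : ℝ) :
    Real.exp t - 1 = ∑' n : ℕ, t ^ (n + 1) / (n + 1).factorial := by
  rw [real_exp_tsum t, Summable.tsum_eq_zero_add (Real.summable_pow_div_factorial t)]
  simp

lemma exp_cs {a b : ℝ} (ha : 0 ≤ a) (hb : 0 ≤ b) :
    (Real.exp (a * b) - 1) ^ 2 ≤ (Real.exp (a ^ 2) - 1) * (Real.exp (b ^ 2) - 1) := by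
  set u : ℕ → ℝ := fun n => a ^ (n + 1) / Real.sqrt ((n + 1).factorial) with hu
  set v : ℕ → ℝ := fun n => b ^ (n + 1) / Real.sqrt ((n + 1).factorial) with hv
  have hfacpos : ∀ n : ℕ, (0 : ℝ) < ((n + 1).factorial : ℝ) := by
    intro n; exact_mod_cast Nat.factorial_pos (n + 1)
  have hsq : ∀ (c : ℝ), 0 ≤ c → ∀ n, (c ^ (n+1) / Real.sqrt ((n+1).factorial)) ^ 2
      = (c ^ 2) ^ (n + 1) / ((n + 1).factorial : ℝ) := by
    intro c hc n
    rw [div_pow, Real.sq_sqrt (hfacpos n).le, ← pow_mul, ← pow_mul, Nat.mul_comm]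
  have huv : ∀ n, u n * v n = (a * b) ^ (n + 1) / ((n + 1).factorial : ℝ) := by
    intro n
    rw [hu, hv]
    simp only []
    rw [div_mul_div_comm, ← mul_pow, Real.mul_self_sqrt (hfacpos n).le]
  have hsu : Summable (fun n => u n ^ 2) := by
    have : (fun n => u n ^ 2) = fun n => (a ^ 2) ^ (n + 1) / ((n + 1).factorial : ℝ) :=
      funext fun n => hsq a ha n
    rw [this]
    exact (summable_nat_add_iff (f := fun n : ℕ => (a ^ 2) ^ n / (n.factorial : ℝ)) 1).mpr
      (Real.summable_pow_div_factorial _)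
  have hsv : Summable (fun n => v n ^ 2) := by
    have : (fun n => v n ^ 2) = fun n => (b ^ 2) ^ (n + 1) / ((n + 1).factorial : ℝ) :=
      funext fun n => hsq b hb n
    rw [this]
    exact (summable_nat_add_iff (f := fun n : ℕ => (b ^ 2) ^ n / (n.factorial : ℝ)) 1).mpr
      (Real.summable_pow_div_factorial _)
  have hsuv : Summable (fun n => u n * v n) := by
    have : (fun n => u n * v n) = fun n => (a * b) ^ (n + 1) / ((n + 1).factorial : ℝ) :=
      funext huv
    rw [this]
    exact (summable_nat_add_iff (f := fun n : ℕ => (a * b) ^ n / (n.factorial : ℝ)) 1).mpr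
      (Real.summable_pow_div_factorial _)
  have hunn : ∀ n, 0 ≤ u n := fun n => div_nonneg (pow_nonneg ha _) (Real.sqrt_nonneg _)
  have hvnn : ∀ n, 0 ≤ v n := fun n => div_nonneg (pow_nonneg hb _) (Real.sqrt_nonneg _)
  have hP : 0 ≤ (∑' n, u n ^ 2) * (∑' n, v n ^ 2) :=
    mul_nonneg (tsum_nonneg fun n => sq_nonneg _) (tsum_nonneg fun n => sq_nonneg _)
  have key : ∀ F : Finset ℕ,
      ∑ n ∈ F, u n * v n ≤ Real.sqrt ((∑' n, u n ^ 2) * (∑' n, v n ^ 2)) := by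
    intro F
    have h1 := Finset.sum_mul_sq_le_sq_mul_sq F u v
    have h2 : (∑ n ∈ F, u n ^ 2) * (∑ n ∈ F, v n ^ 2)
        ≤ (∑' n, u n ^ 2) * (∑' n, v n ^ 2) := by
      apply mul_le_mul (Summable.sum_le_tsum F (fun _ _ => sq_nonneg _) hsu)
        (Summable.sum_le_tsum F (fun _ _ => sq_nonneg _) hsv)
        (Finset.sum_nonneg fun _ _ => sq_nonneg _) (tsum_nonneg fun n => sq_nonneg _)
    have h3 : (∑ n ∈ F, u n * v n) ^ 2 ≤ (∑' n, u n ^ 2) * (∑' n, v n ^ 2) := le_trans h1 h2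
    have h4 : 0 ≤ ∑ n ∈ F, u n * v n :=
      Finset.sum_nonneg fun n _ => mul_nonneg (hunn n) (hvnn n)
    calc ∑ n ∈ F, u n * v n = Real.sqrt ((∑ n ∈ F, u n * v n) ^ 2) := (Real.sqrt_sq h4).symm
    _ ≤ Real.sqrt ((∑' n, u n ^ 2) * (∑' n, v n ^ 2)) := Real.sqrt_le_sqrt h3
  have h5 : ∑' n, u n * v n ≤ Real.sqrt ((∑' n, u n ^ 2) * (∑' n, v n ^ 2)) :=
    Summable.tsum_le_of_sum_le hsuv key
  have h6 : (∑' n, u n * v n) ^ 2 ≤ (∑' n, u n ^ 2) * (∑' n, v n ^ 2) := by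
    calc (∑' n, u n * v n) ^ 2 ≤ Real.sqrt ((∑' n, u n ^ 2) * (∑' n, v n ^ 2)) ^ 2 :=
          pow_le_pow_left₀ (tsum_nonneg fun n => mul_nonneg (hunn n) (hvnn n)) h5 2
    _ = (∑' n, u n ^ 2) * (∑' n, v n ^ 2) := Real.sq_sqrt hP
  have e1 : Real.exp (a * b) - 1 = ∑' n, u n * v n := by
    rw [real_exp_tail]
    exact tsum_congr fun n => (huv n).symm
  have e2 : Real.exp (a ^ 2) - 1 = ∑' n, u n ^ 2 := by
    rw [real_exp_tail]
    exact tsum_congr fun n => (hsq a ha n).symm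
  have e3 : Real.exp (b ^ 2) - 1 = ∑' n, v n ^ 2 := by
    rw [real_exp_tail]
    exact tsum_congr fun n => (hsq b hb n).symm
  rw [e1, e2, e3]
  exact h6
lemma expansion (f : 𝓢(Ed d, ℂ)) (hf : support ⇑f ⊆ Q d) (lamk muk : Ed d) :
    fourierT ⇑f muk
      = ∑' m : ℕ, ∑ a : Fin m → Fin d,
          (((-(2 * Real.pi) : ℝ) : ℂ) * Complex.I) ^ m / (m.factorial : ℂ)
            * (∏ i, ((muk (a i) - lamk (a i) : ℝ) : ℂ))
            * fourierT (⇑(hMap f m a)) lamk := by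
  set δ : Ed d := muk - lamk with hδ
  set eL : Ed d → ℂ :=
    fun x => Complex.exp ((-(2 * Real.pi * (inner ℝ x lamk : ℝ)) : ℝ) * Complex.I) with heL
  set w : Ed d → ℂ :=
    fun x => ((-(2 * Real.pi * (inner ℝ x δ : ℝ)) : ℝ) : ℂ) * Complex.I with hw
  set F : ℕ → Ed d → ℂ := fun m x => (f x * eL x) * (w x ^ m / (m.factorial : ℂ)) with hF
  have hexp : ∀ z : ℂ, Complex.exp z = ∑' m : ℕ, z ^ m / (m.factorial : ℂ) := by
    intro z; rw [Complex.exp_eq_exp_ℂ, NormedSpace.exp_eq_tsum_div]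
  have hpt : ∀ x : Ed d,
      f x * Complex.exp ((-(2 * Real.pi * (inner ℝ x muk : ℝ)) : ℝ) * Complex.I)
        = ∑' m : ℕ, F m x := by
    intro x
    simp only [hF]
    rw [tsum_mul_left, ← hexp (w x)]
    have harg : ((-(2 * Real.pi * (inner ℝ x muk : ℝ)) : ℝ) : ℂ) * Complex.I
        = ((-(2 * Real.pi * (inner ℝ x lamk : ℝ)) : ℝ) : ℂ) * Complex.I + w x := by
      simp only [hw]
      have hin : (inner ℝ x δ : ℝ) = (inner ℝ x muk : ℝ) - (inner ℝ x lamk : ℝ) := by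
        rw [hδ]; exact inner_sub_right x muk lamk
      rw [hin]; push_cast; ring
    rw [harg, Complex.exp_add]
    simp only [heL]
    ring
  have hcontw : ∀ γ : Ed d, Continuous fun x : Ed d =>
      ((-(2 * Real.pi * (inner ℝ x γ : ℝ)) : ℝ) : ℂ) * Complex.I := by
    intro γ
    apply Continuous.mul _ continuous_const
    exact Complex.continuous_ofReal.comp
      ((continuous_const.mul (continuous_id.inner continuous_const)).neg)
  have hconte : Continuous eL := by
    rw [heL]; exact Complex.continuous_exp.comp (hcontw lamk)
  have hcontwδ : Continuous w := by rw [hw]; exact hcontw δ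
  have hcontF : ∀ m, Continuous (F m) := by
    intro m
    rw [hF]
    exact (f.continuous.mul hconte).mul ((hcontwδ.pow m).div_const _)
  have hsupF : ∀ m, support (F m) ⊆ Q d := by
    intro m x hx
    apply hf
    rw [mem_support] at hx ⊢
    intro h0
    apply hx
    simp only [hF, h0]
    ring
  have hFint : ∀ m, Integrable (F m) := fun m => integrable_of_suppQ (hcontF m) (hsupF m)
  set C : ℝ := 2 * Real.pi * (Real.sqrt d * ‖δ‖) with hC
  have hCnn : 0 ≤ C := by rw [hC]; positivity
  have hwC : ∀ x ∈ Q d, ‖w x‖ ≤ C := by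
    intro x hx
    have hwnorm : ‖w x‖ = |2 * Real.pi * (inner ℝ x δ : ℝ)| := by
      simp only [hw]
      rw [norm_mul, Complex.norm_I, mul_one, Complex.norm_real, Real.norm_eq_abs, abs_neg]
    rw [hwnorm, hC]
    rw [abs_mul, abs_of_pos (by positivity : (0:ℝ) < 2 * Real.pi)]
    have h1 : |(inner ℝ x δ : ℝ)| ≤ Real.sqrt d * ‖δ‖ :=
      (abs_real_inner_le_norm x δ).trans
        (mul_le_mul_of_nonneg_right (norm_le_sqrt_of_memQ hx) (norm_nonneg _))
    exact mul_le_mul_of_nonneg_left h1 (by positivity)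
  have hFnorm : ∀ m x, ‖F m x‖ ≤ ‖f x‖ * (C ^ m / m.factorial) := by
    intro m x
    by_cases hx : f x = 0
    · simp only [hF, hx]
      simp
    · have hxQ : x ∈ Q d := hf (mem_support.mpr hx)
      simp only [hF]
      rw [norm_mul, norm_mul, norm_div, norm_pow, Complex.norm_natCast]
      have he1 : ‖eL x‖ = 1 := by
        simp only [heL]
        rw [Complex.norm_exp_ofReal_mul_I]
      rw [he1, mul_one]
      gcongr
      exact hwC x hxQ
  have hFintnorm : ∀ m, ∫ x : Ed d, ‖F m x‖ ≤ (∫ x : Ed d, ‖f x‖) * (C ^ m / m.factorial) := by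
    intro m
    have h1 : Integrable fun x : Ed d => ‖F m x‖ := (hFint m).norm
    have h2 : Integrable fun x : Ed d => ‖f x‖ * (C ^ m / m.factorial) :=
      (integrable_of_suppQ f.continuous hf).norm.mul_const _
    calc ∫ x : Ed d, ‖F m x‖ ≤ ∫ x : Ed d, ‖f x‖ * (C ^ m / m.factorial) :=
          integral_mono h1 h2 (hFnorm m)
    _ = (∫ x : Ed d, ‖f x‖) * (C ^ m / m.factorial) := integral_mul_const _ _
  have hFsummable : Summable fun m => ∫ x : Ed d, ‖F m x‖ :=
    Summable.of_nonneg_of_le (fun m => integral_nonneg fun x => norm_nonneg _)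
      hFintnorm (((Real.summable_pow_div_factorial C)).mul_left _)
  have h0 : fourierT ⇑f muk = ∫ x : Ed d, ∑' m, F m x := by
    unfold fourierT
    exact integral_congr_ae (Filter.Eventually.of_forall hpt)
  have hswap : ∫ x : Ed d, ∑' m, F m x = ∑' m, ∫ x : Ed d, F m x :=
    (integral_tsum_of_summable_integral_norm hFint hFsummable).symm
  have hip : ∀ x : Ed d, ((inner ℝ x δ : ℝ) : ℂ) = ∑ j, (x j : ℂ) * (δ j : ℂ) := by
    intro x
    have h1 : (inner ℝ x δ : ℝ) = ∑ j, x j * δ j := by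
      simp [PiLp.inner_apply, RCLike.inner_apply, conj_trivial]
      exact Finset.sum_congr rfl fun _ _ => mul_comm _ _
    rw [h1]
    push_cast
    rfl
  have hpow : ∀ (y : Fin d → ℂ) (m : ℕ),
      (∑ j, y j) ^ m = ∑ a : Fin m → Fin d, ∏ i, y (a i) := by
    intro y m
    calc (∑ j, y j) ^ m = ∏ _i : Fin m, (∑ j, y j) := by
          rw [Finset.prod_const, Finset.card_univ, Fintype.card_fin]
    _ = ∑ a ∈ Fintype.piFinset (fun _ : Fin m => (Finset.univ : Finset (Fin d))),
          ∏ i, y (a i) := Finset.prod_univ_sum _ _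
    _ = ∑ a : Fin m → Fin d, ∏ i, y (a i) := by rw [Fintype.piFinset_univ]
  have hwx : ∀ x, w x = (((-(2 * Real.pi) : ℝ) : ℂ) * Complex.I) * ((inner ℝ x δ : ℝ) : ℂ) := by
    intro x; simp only [hw]; push_cast; ring
  have hFa : ∀ m x, F m x = ∑ a : Fin m → Fin d,
      (((-(2 * Real.pi) : ℝ) : ℂ) * Complex.I) ^ m / (m.factorial : ℂ)
        * (∏ i, ((δ (a i) : ℝ) : ℂ)) * (hMap f m a x * eL x) := by
    intro m x
    simp only [hF]
    rw [hwx, mul_pow, hip, hpow (fun j => (x j : ℂ) * (δ j : ℂ)) m]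
    rw [Finset.mul_sum, Finset.sum_div, Finset.mul_sum]
    apply Finset.sum_congr rfl
    intro a _
    rw [hMap_apply, Finset.prod_mul_distrib]
    ring
  have hGint : ∀ (m : ℕ) (a : Fin m → Fin d),
      Integrable fun x : Ed d => hMap f m a x * eL x := by
    intro m a
    apply integrable_of_suppQ ((hMap f m a).continuous.mul hconte)
    intro x hx
    exact ((support_hMap f m a).trans hf) (mem_support.mpr (left_ne_zero_of_mul hx))
  have hFm_int : ∀ m, ∫ x : Ed d, F m x = ∑ a : Fin m → Fin d,
      (((-(2 * Real.pi) : ℝ) : ℂ) * Complex.I) ^ m / (m.factorial : ℂ)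
        * (∏ i, ((δ (a i) : ℝ) : ℂ)) * fourierT (⇑(hMap f m a)) lamk := by
    intro m
    rw [integral_congr_ae (Filter.Eventually.of_forall (hFa m))]
    rw [integral_finset_sum _ (fun a _ => (hGint m a).const_mul _)]
    apply Finset.sum_congr rfl
    intro a _
    rw [MeasureTheory.integral_const_mul]
    rfl
  rw [h0, hswap]
  refine tsum_congr fun m => ?_
  rw [hFm_int m]
  refine Finset.sum_congr rfl fun a _ => ?_
  rw [hδ]
  rfl
def Tfun (lam mu : (Fin d → ℤ) → Ed d) (f : 𝓢(Ed d, ℂ))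
    (j : Σ m : ℕ, (Fin m → Fin d)) (k : Fin d → ℤ) : ℂ :=
  (((-(2 * Real.pi) : ℝ) : ℂ) * Complex.I) ^ j.1 / (j.1.factorial : ℂ)
    * (∏ i, ((mu k (j.2 i) - lam k (j.2 i) : ℝ) : ℂ))
    * fourierT (⇑(hMap f j.1 j.2)) (lam k)

def Sfun (M c : ℝ) (j : Σ m : ℕ, (Fin m → Fin d)) : ℝ :=
  (Real.pi * M) ^ j.1 / j.1.factorial * c

end PFFB

open PFFB

/-- if `{λ_k}_{k∈ℤ^d}` satisfies the frame inequalities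
`A‖f‖₂² ≤ Σ_k |f̂(λ_k)|² ≤ B‖f‖₂²` on `𝒰_d` and `‖λ_k − μ_k‖_∞ < M` for all `k`, then for
every `ρ > 0` and `f ∈ 𝒰_d`, `Σ_k |f̂(μ_k)|² ≤ B(1+√B')²‖f‖₂²`, where
`B' = (B/A)(e^{M²ρ²d} − 1)(e^{π²d/ρ²} − 1)`. -/
theorem perturbed_fourier_frame_bessel {d : ℕ}
    (lam mu : (Fin d → ℤ) → EuclideanSpace ℝ (Fin d))
    (A B : ℝ) (hA : 0 < A) (hAB : A ≤ B)
    (hframe : ∀ f : SchwartzMap (EuclideanSpace ℝ (Fin d)) ℂ,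
      Function.support ⇑f ⊆ {x : EuclideanSpace ℝ (Fin d) | ∀ i, |x i| ≤ 1 / 2} →
      A * ∫ x : EuclideanSpace ℝ (Fin d), ‖f x‖ ^ 2 ≤
          ∑' k : Fin d → ℤ, ‖fourierT (⇑f) (lam k)‖ ^ 2 ∧
        ∑' k : Fin d → ℤ, ‖fourierT (⇑f) (lam k)‖ ^ 2 ≤
          B * ∫ x : EuclideanSpace ℝ (Fin d), ‖f x‖ ^ 2)
    (M : ℝ) (hM : 0 < M)
    (hclose : ∀ k : Fin d → ℤ, ∀ i : Fin d, |lam k i - mu k i| < M)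
    (ρ : ℝ) (hρ : 0 < ρ)
    (f : SchwartzMap (EuclideanSpace ℝ (Fin d)) ℂ)
    (hf : Function.support ⇑f ⊆ {x : EuclideanSpace ℝ (Fin d) | ∀ i, |x i| ≤ 1 / 2}) :
    Summable (fun k : Fin d → ℤ => ‖fourierT (⇑f) (mu k)‖ ^ 2) ∧
    ∑' k : Fin d → ℤ, ‖fourierT (⇑f) (mu k)‖ ^ 2 ≤
      B * (1 + Real.sqrt ((B / A) * (Real.exp (M ^ 2 * ρ ^ 2 * d) - 1) *
        (Real.exp (Real.pi ^ 2 * d / ρ ^ 2) - 1))) ^ 2 *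
        ∫ x : EuclideanSpace ℝ (Fin d), ‖f x‖ ^ 2 := by
  classical
  have hB : 0 < B := lt_of_lt_of_le hA hAB
  have hfQ : Function.support ⇑f ⊆ Q d := hf
  set I2 : ℝ := ∫ x : EuclideanSpace ℝ (Fin d), ‖f x‖ ^ 2 with hI2
  have hI2nn : 0 ≤ I2 := integral_nonneg fun x => sq_nonneg _
  have hBI2 : 0 ≤ B * I2 := mul_nonneg hB.le hI2nn
  set T := Tfun lam mu f with hT_def
  set S := Sfun (d := d) M (Real.sqrt (B * I2)) with hS_def
  have hsuppH : ∀ (m : ℕ) (a : Fin m → Fin d), Function.support ⇑(hMap f m a) ⊆ Q d :=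
    fun m a => (support_hMap f m a).trans hfQ
  have hsumH : ∀ (m : ℕ) (a : Fin m → Fin d),
      Summable fun k => ‖fourierT (⇑(hMap f m a)) (lam k)‖ ^ 2 :=
    fun m a => frame_summable hA (fun g hg => (hframe g hg).1) _ (hsuppH m a)
  have hHle : ∀ (m : ℕ) (a : Fin m → Fin d),
      ∑' k : Fin d → ℤ, ‖fourierT (⇑(hMap f m a)) (lam k)‖ ^ 2
        ≤ B * ((1 / 4) ^ m * I2) :=
    fun m a => ((hframe (hMap f m a) (hsuppH m a)).2).trans
      (mul_le_mul_of_nonneg_left (hMap_l2 f hfQ m a) hB.le)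
  -- coefficient bound
  have hcoef : ∀ (m : ℕ) (a : Fin m → Fin d) (k : Fin d → ℤ),
      ‖(((-(2 * Real.pi) : ℝ) : ℂ) * Complex.I) ^ m / (m.factorial : ℂ)
        * (∏ i, ((mu k (a i) - lam k (a i) : ℝ) : ℂ))‖ ≤ (2 * Real.pi * M) ^ m / m.factorial := by
    intro m a k
    rw [norm_mul, norm_div, norm_pow, Complex.norm_natCast]
    have h1 : ‖((-(2 * Real.pi) : ℝ) : ℂ) * Complex.I‖ = 2 * Real.pi := by
      rw [norm_mul, Complex.norm_I, mul_one, Complex.norm_real, Real.norm_eq_abs, abs_neg,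
        abs_of_pos (by positivity)]
    rw [h1]
    have h2 : ‖∏ i, ((mu k (a i) - lam k (a i) : ℝ) : ℂ)‖ ≤ M ^ m := by
      rw [norm_prod]
      calc ∏ i, ‖((mu k (a i) - lam k (a i) : ℝ) : ℂ)‖ ≤ ∏ _i : Fin m, M :=
            Finset.prod_le_prod (fun _ _ => norm_nonneg _) (fun i _ => by
              rw [Complex.norm_real, Real.norm_eq_abs, abs_sub_comm]
              exact (hclose k (a i)).le)
      _ = M ^ m := by rw [Finset.prod_const, Finset.card_univ, Fintype.card_fin]
    calc (2 * Real.pi) ^ m / (m.factorial : ℝ) * ‖∏ i, ((mu k (a i) - lam k (a i) : ℝ) : ℂ)‖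
        ≤ (2 * Real.pi) ^ m / (m.factorial : ℝ) * M ^ m :=
          mul_le_mul_of_nonneg_left h2 (by positivity)
    _ = (2 * Real.pi * M) ^ m / m.factorial := by rw [mul_pow]; ring
  have hTnorm : ∀ (j : Σ m : ℕ, (Fin m → Fin d)) (k : Fin d → ℤ),
      ‖T j k‖ ≤ (2 * Real.pi * M) ^ j.1 / j.1.factorial
        * ‖fourierT (⇑(hMap f j.1 j.2)) (lam k)‖ := by
    rintro ⟨m, a⟩ k
    rw [hT_def]
    unfold Tfun
    rw [norm_mul]
    exact mul_le_mul_of_nonneg_right (hcoef m a k) (norm_nonneg _)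
  have hT : ∀ j : Σ m : ℕ, (Fin m → Fin d), Summable fun k => ‖T j k‖ ^ 2 := by
    intro j
    refine Summable.of_nonneg_of_le (fun k => sq_nonneg _) (fun k => ?_)
      (((hsumH j.1 j.2).mul_left (((2 * Real.pi * M) ^ j.1 / (j.1.factorial : ℝ)) ^ 2)))
    calc ‖T j k‖ ^ 2
        ≤ ((2 * Real.pi * M) ^ j.1 / j.1.factorial
            * ‖fourierT (⇑(hMap f j.1 j.2)) (lam k)‖) ^ 2 :=
          pow_le_pow_left₀ (norm_nonneg _) (hTnorm j k) 2
    _ = ((2 * Real.pi * M) ^ j.1 / (j.1.factorial : ℝ)) ^ 2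
          * ‖fourierT (⇑(hMap f j.1 j.2)) (lam k)‖ ^ 2 := mul_pow _ _ 2
  have hSnn : ∀ j : Σ m : ℕ, (Fin m → Fin d), 0 ≤ S j := by
    intro j
    rw [hS_def]
    unfold Sfun
    exact mul_nonneg (div_nonneg (pow_nonneg (mul_nonneg Real.pi_pos.le hM.le) _)
      (Nat.cast_nonneg _)) (Real.sqrt_nonneg _)
  have hS : ∀ j : Σ m : ℕ, (Fin m → Fin d), ∑' k : Fin d → ℤ, ‖T j k‖ ^ 2 ≤ S j ^ 2 := by
    rintro ⟨m, a⟩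
    set K : ℝ := (2 * Real.pi * M) ^ m / (m.factorial : ℝ) with hK
    have hKnn : 0 ≤ K := by rw [hK]; positivity
    have h1 : ∑' k : Fin d → ℤ, ‖T ⟨m, a⟩ k‖ ^ 2
        ≤ ∑' k : Fin d → ℤ, K ^ 2 * ‖fourierT (⇑(hMap f m a)) (lam k)‖ ^ 2 := by
      refine Summable.tsum_le_tsum (fun k => ?_) (hT ⟨m, a⟩) ((hsumH m a).mul_left _)
      calc ‖T ⟨m, a⟩ k‖ ^ 2 ≤ (K * ‖fourierT (⇑(hMap f m a)) (lam k)‖) ^ 2 :=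
            pow_le_pow_left₀ (norm_nonneg _) (hTnorm ⟨m, a⟩ k) 2
      _ = K ^ 2 * ‖fourierT (⇑(hMap f m a)) (lam k)‖ ^ 2 := mul_pow _ _ 2
    rw [tsum_mul_left] at h1
    have h2 : K ^ 2 * ∑' k : Fin d → ℤ, ‖fourierT (⇑(hMap f m a)) (lam k)‖ ^ 2
        ≤ K ^ 2 * (B * ((1 / 4) ^ m * I2)) :=
      mul_le_mul_of_nonneg_left (hHle m a) (sq_nonneg K)
    have hkey : ((2 * Real.pi * M) ^ m) ^ 2 * (1 / 4 : ℝ) ^ m = ((Real.pi * M) ^ m) ^ 2 := by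
      rw [← pow_mul, ← pow_mul, mul_comm m 2, pow_mul, pow_mul, ← mul_pow]
      congr 1
      ring
    have h3 : K ^ 2 * (B * ((1 / 4) ^ m * I2)) = S ⟨m, a⟩ ^ 2 := by
      have hstep : K ^ 2 * (B * ((1 / 4) ^ m * I2))
          = (((2 * Real.pi * M) ^ m) ^ 2 * (1 / 4 : ℝ) ^ m) * (B * I2)
            / ((m.factorial : ℝ)) ^ 2 := by
        rw [hK]; ring
      rw [hstep, hkey, hS_def]
      unfold Sfun
      dsimp only
      rw [show ((Real.pi * M) ^ m / (m.factorial : ℝ) * Real.sqrt (B * I2)) ^ 2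
          = ((Real.pi * M) ^ m / (m.factorial : ℝ)) ^ 2 * Real.sqrt (B * I2) ^ 2 from
          mul_pow _ _ 2, Real.sq_sqrt hBI2]
      ring
    calc ∑' k : Fin d → ℤ, ‖T ⟨m, a⟩ k‖ ^ 2 ≤ K ^ 2 * (B * ((1 / 4) ^ m * I2)) :=
          le_trans h1 h2
    _ = S ⟨m, a⟩ ^ 2 := h3
  have hfiber : ∀ m : ℕ, ∑' a : Fin m → Fin d, S ⟨m, a⟩
      = (Real.pi * M * d) ^ m / m.factorial * Real.sqrt (B * I2) := by
    intro m
    rw [tsum_fintype]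
    rw [hS_def]
    unfold Sfun
    dsimp only
    rw [Finset.sum_const, Finset.card_univ, Fintype.card_fun, Fintype.card_fin, Fintype.card_fin,
      nsmul_eq_mul]
    push_cast
    rw [mul_pow (Real.pi * M) (d : ℝ) m]
    ring
  have hβsum : Summable S := by
    apply (summable_sigma_of_nonneg hSnn).mpr
    constructor
    · exact fun m => (hasSum_fintype _).summable
    · have : (fun m : ℕ => ∑' a : Fin m → Fin d, S ⟨m, a⟩)
          = fun m : ℕ => (Real.pi * M * d) ^ m / m.factorial * Real.sqrt (B * I2) :=
        funext hfiber
      rw [this]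
      exact (Real.summable_pow_div_factorial _).mul_right _
  have htsumS : ∑' j : Σ m : ℕ, (Fin m → Fin d), S j
      = Real.exp (Real.pi * M * d) * Real.sqrt (B * I2) := by
    rw [Summable.tsum_sigma hβsum, tsum_congr hfiber, tsum_mul_right, ← real_exp_tsum]
  have hexpand : ∀ k : Fin d → ℤ, fourierT (⇑f) (mu k) = ∑' j : Σ m : ℕ, (Fin m → Fin d), T j k := by
    intro k
    have hTk : Summable fun j : Σ m : ℕ, (Fin m → Fin d) => T j k := by
      apply Summable.of_norm
      refine hβsum.of_nonneg_of_le (fun j => norm_nonneg _) (fun j => ?_)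
      have h1 : ‖T j k‖ ^ 2 ≤ S j ^ 2 :=
        le_trans (Summable.le_tsum (hT j) k fun _ _ => sq_nonneg _) (hS j)
      have h2 := Real.sqrt_le_sqrt h1
      rwa [Real.sqrt_sq (norm_nonneg _), Real.sqrt_sq (hSnn j)] at h2
    rw [expansion f hfQ (lam k) (mu k), Summable.tsum_sigma hTk]
    exact tsum_congr fun m => by rw [tsum_fintype]; rfl
  obtain ⟨hsumm, hbound⟩ := minkowski T S hT hS hSnn hβsum
  have hfun : (fun k : Fin d → ℤ => ‖fourierT (⇑f) (mu k)‖ ^ 2)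
      = fun k : Fin d → ℤ => ‖∑' j : Σ m : ℕ, (Fin m → Fin d), T j k‖ ^ 2 := by
    funext k
    rw [hexpand k]
  constructor
  · rw [hfun]; exact hsumm
  · rw [hfun]
    refine hbound.trans ?_
    rw [htsumS]
    -- numeric endgame
    set B' : ℝ := (B / A) * (Real.exp (M ^ 2 * ρ ^ 2 * d) - 1) *
      (Real.exp (Real.pi ^ 2 * d / ρ ^ 2) - 1) with hB'
    have hX : 0 ≤ Real.exp (M ^ 2 * ρ ^ 2 * d) - 1 := by
      have h := Real.one_le_exp (show (0:ℝ) ≤ M ^ 2 * ρ ^ 2 * d by positivity)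
      linarith
    have hY : 0 ≤ Real.exp (Real.pi ^ 2 * d / ρ ^ 2) - 1 := by
      have h := Real.one_le_exp (show (0:ℝ) ≤ Real.pi ^ 2 * d / ρ ^ 2 by positivity)
      linarith
    have hE1 : (1:ℝ) ≤ Real.exp (Real.pi * M * d) :=
      Real.one_le_exp (mul_nonneg (mul_nonneg Real.pi_pos.le hM.le) (Nat.cast_nonneg d))
    have hcs : Real.exp (Real.pi * M * d) - 1 ≤ Real.sqrt B' := by
      have hab := exp_cs (a := M * ρ * Real.sqrt d) (b := Real.pi * Real.sqrt d / ρ)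
        (mul_nonneg (mul_nonneg hM.le hρ.le) (Real.sqrt_nonneg _))
        (div_nonneg (mul_nonneg Real.pi_pos.le (Real.sqrt_nonneg _)) hρ.le)
      have hd : Real.sqrt d * Real.sqrt d = (d : ℝ) := Real.mul_self_sqrt (Nat.cast_nonneg d)
      have e1 : (M * ρ * Real.sqrt d) * (Real.pi * Real.sqrt d / ρ) = Real.pi * M * d := by
        field_simp [hρ.ne']
        linear_combination hd
      have e2 : (M * ρ * Real.sqrt d) ^ 2 = M ^ 2 * ρ ^ 2 * d := by
        rw [mul_pow, mul_pow, Real.sq_sqrt (Nat.cast_nonneg d)]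
      have e3 : (Real.pi * Real.sqrt d / ρ) ^ 2 = Real.pi ^ 2 * d / ρ ^ 2 := by
        rw [div_pow, mul_pow, Real.sq_sqrt (Nat.cast_nonneg d)]
      rw [e1, e2, e3] at hab
      have h2 : (Real.exp (Real.pi * M * d) - 1) ^ 2 ≤ B' := by
        rw [hB']
        calc (Real.exp (Real.pi * M * d) - 1) ^ 2
            ≤ (Real.exp (M ^ 2 * ρ ^ 2 * d) - 1) * (Real.exp (Real.pi ^ 2 * d / ρ ^ 2) - 1) := hab
        _ = 1 * ((Real.exp (M ^ 2 * ρ ^ 2 * d) - 1) * (Real.exp (Real.pi ^ 2 * d / ρ ^ 2) - 1)) :=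
              (one_mul _).symm
        _ ≤ (B / A) * ((Real.exp (M ^ 2 * ρ ^ 2 * d) - 1) * (Real.exp (Real.pi ^ 2 * d / ρ ^ 2) - 1)) :=
              mul_le_mul_of_nonneg_right ((one_le_div hA).mpr hAB) (mul_nonneg hX hY)
        _ = (B / A) * (Real.exp (M ^ 2 * ρ ^ 2 * d) - 1) * (Real.exp (Real.pi ^ 2 * d / ρ ^ 2) - 1) :=
              (mul_assoc _ _ _).symm
      have h3 := Real.sqrt_le_sqrt h2
      rwa [Real.sqrt_sq (by linarith)] at h3
    have hexpc : Real.exp (Real.pi * M * d) ≤ 1 + Real.sqrt B' := by linarith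
    have h1 : (Real.exp (Real.pi * M * d) * Real.sqrt (B * I2)) ^ 2
        ≤ ((1 + Real.sqrt B') * Real.sqrt (B * I2)) ^ 2 :=
      pow_le_pow_left₀ (by positivity) (mul_le_mul_of_nonneg_right hexpc (Real.sqrt_nonneg _)) 2
    refine h1.trans_eq ?_
    rw [mul_pow, Real.sq_sqrt hBI2]
    ring

end
end

section
/- Let d ≥ 2, let Q ⊂ S^{d−1} be a finite set, and let ε > 0. Then there exists a Schwartz function f on ℝ^d with support contained in the ball B_ε(0) such that ‖f‖₂ = 1 and f̂(γu) = 0 for all γ ∈ ℝ and all u ∈ Q (equivalently, the Radon transform R_u(f) vanishes identically for every u ∈ Q). -/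
open MeasureTheory Real Complex FourierTransform

noncomputable section

namespace RadonAux

/-- A smooth compactly supported function is a Schwartz map. -/
def ofCS {V F : Type*} [NormedAddCommGroup V] [NormedSpace ℝ V] [NormedAddCommGroup F]
    [NormedSpace ℝ F] (f : V → F) (hf : ContDiff ℝ ((⊤ : ℕ∞)) f) (h : HasCompactSupport f) :
    SchwartzMap V F where
  toFun := f
  smooth' := hf
  decay' := by
    intro k n
    have hc : Continuous fun x => ‖x‖ ^ k * ‖iteratedFDeriv ℝ n f x‖ :=
      (continuous_norm.pow k).mul (hf.continuous_iteratedFDeriv (mod_cast le_top)).norm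
    have hcs : HasCompactSupport fun x => ‖x‖ ^ k * ‖iteratedFDeriv ℝ n f x‖ := by
      apply HasCompactSupport.intro (h.iteratedFDeriv (𝕜 := ℝ) n)
      intro x hx
      rw [image_eq_zero_of_notMem_tsupport hx, norm_zero, mul_zero]
    obtain ⟨C, hC⟩ := hcs.exists_bound_of_continuous hc
    exact ⟨C, fun x => (le_abs_self _).trans (Real.norm_eq_abs _ ▸ hC x)⟩

@[simp] lemma ofCS_apply {V F : Type*} [NormedAddCommGroup V] [NormedSpace ℝ V]
    [NormedAddCommGroup F] [NormedSpace ℝ F] (f : V → F) (hf : ContDiff ℝ ((⊤ : ℕ∞)) f)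
    (h : HasCompactSupport f) (x : V) : ofCS f hf h x = f x := rfl

variable {d : ℕ}

lemma fourierT_eq (f : EuclideanSpace ℝ (Fin d) → ℂ) (ξ : EuclideanSpace ℝ (Fin d)) :
    fourierT f ξ = 𝓕 f ξ := by
  rw [fourierT, Real.fourier_eq']
  congr 1
  ext x
  rw [smul_eq_mul, mul_comm]
  congr 2
  push_cast
  ring

def Dlist (L : List (EuclideanSpace ℝ (Fin d)))
    (g : SchwartzMap (EuclideanSpace ℝ (Fin d)) ℂ) :
    SchwartzMap (EuclideanSpace ℝ (Fin d)) ℂ :=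
  L.foldr (fun w h => LineDeriv.lineDerivOp w h) g

@[simp] lemma Dlist_nil (g : SchwartzMap (EuclideanSpace ℝ (Fin d)) ℂ) : Dlist [] g = g := rfl

@[simp] lemma Dlist_cons (w : EuclideanSpace ℝ (Fin d)) (L : List (EuclideanSpace ℝ (Fin d)))
    (g : SchwartzMap (EuclideanSpace ℝ (Fin d)) ℂ) :
    Dlist (w :: L) g = (LineDeriv.lineDerivOp w (Dlist L g) : SchwartzMap (EuclideanSpace ℝ (Fin d)) ℂ) := rfl

lemma tsupport_pderiv (w : EuclideanSpace ℝ (Fin d))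
    (f : SchwartzMap (EuclideanSpace ℝ (Fin d)) ℂ) :
    tsupport ⇑((LineDeriv.lineDerivOp w f : SchwartzMap (EuclideanSpace ℝ (Fin d)) ℂ)) ⊆ tsupport ⇑f := by
  apply closure_minimal _ isClosed_closure
  intro x hx
  simp only [Function.mem_support, SchwartzMap.lineDerivOp_apply_eq_fderiv] at hx
  have h1 : fderiv ℝ (⇑f) x ≠ 0 := fun h => hx (by rw [h]; rfl)
  exact support_fderiv_subset (𝕜 := ℝ) h1

lemma tsupport_Dlist (L : List (EuclideanSpace ℝ (Fin d)))
    (g : SchwartzMap (EuclideanSpace ℝ (Fin d)) ℂ) :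
    tsupport ⇑(Dlist L g) ⊆ tsupport ⇑g := by
  induction L with
  | nil => exact subset_rfl
  | cons w L ih => exact (tsupport_pderiv w (Dlist L g)).trans ih

lemma fourier_pderiv (f : SchwartzMap (EuclideanSpace ℝ (Fin d)) ℂ)
    (w ξ : EuclideanSpace ℝ (Fin d)) :
    𝓕 (⇑((LineDeriv.lineDerivOp w f : SchwartzMap (EuclideanSpace ℝ (Fin d)) ℂ))) ξ =
      (-(2 * ↑π * Complex.I)) • ((-(inner ℝ ξ w : ℝ)) • 𝓕 (⇑f) ξ) := by
  have hint : Integrable (fun x => fderiv ℝ (⇑f) x) volume := by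
    have := (SchwartzMap.fderivCLM ℝ _ _ f).integrable (μ := volume)
    exact this
  have hcoe : ⇑((LineDeriv.lineDerivOp w f : SchwartzMap (EuclideanSpace ℝ (Fin d)) ℂ)) = fun x => fderiv ℝ (⇑f) x w := by
    ext x; exact SchwartzMap.lineDerivOp_apply_eq_fderiv w f x
  have happ : 𝓕 (fun x => fderiv ℝ (⇑f) x w) ξ = 𝓕 (fun x => fderiv ℝ (⇑f) x) ξ w :=
    (Real.fourier_continuousLinearMap_apply hint).symm
  have h := Real.fourier_fderiv f.integrable f.differentiable hint
  rw [hcoe, happ, h]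
  simp [VectorFourier.fourierSMulRight_apply]
  exact Or.inl rfl

lemma fourier_Dlist_zero (L : List (EuclideanSpace ℝ (Fin d)))
    (g : SchwartzMap (EuclideanSpace ℝ (Fin d)) ℂ) (ξ : EuclideanSpace ℝ (Fin d))
    (hw : ∃ w ∈ L, (inner ℝ ξ w : ℝ) = 0) :
    𝓕 (⇑(Dlist L g)) ξ = 0 := by
  induction L with
  | nil => simp at hw
  | cons w L ih =>
    rw [Dlist_cons, fourier_pderiv]
    obtain ⟨v, hv, hvz⟩ := hw
    rcases List.mem_cons.mp hv with rfl | hv'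
    · rw [hvz]; simp
    · rw [ih ⟨v, hv', hvz⟩]; simp

lemma eq_zero_of_fderiv_dir {h : EuclideanSpace ℝ (Fin d) → ℂ} (hdiff : Differentiable ℝ h)
    (hcs : HasCompactSupport h) {w : EuclideanSpace ℝ (Fin d)} (hw : w ≠ 0)
    (hz : ∀ x, fderiv ℝ h x w = 0) : ∀ x, h x = 0 := by
  intro x
  obtain ⟨R, hR⟩ := hcs.isBounded.subset_closedBall 0
  set φ : ℝ → ℂ := fun t => h (x + t • w) with hφ
  have hder : ∀ t : ℝ, HasDerivAt φ 0 t := by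
    intro t
    have h1 : HasDerivAt (fun s : ℝ => x + s • w) w t := by
      simpa using ((hasDerivAt_id t).smul_const w).const_add x
    have h2 := (hdiff (x + t • w)).hasFDerivAt.comp_hasDerivAt t h1
    exact (by simpa [hz] using h2 : HasDerivAt (h ∘ fun s : ℝ => x + s • w) 0 t)
  have hconst : ∀ a b : ℝ, φ a = φ b := fun a b =>
    is_const_of_deriv_eq_zero (fun t => (hder t).differentiableAt)
      (fun t => (hder t).deriv) a b
  have hwpos : 0 < ‖w‖ := norm_pos_iff.mpr hw
  set T : ℝ := (max R 0 + ‖x‖ + 1) / ‖w‖ with hT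
  have hTpos : 0 < T := by positivity
  have hout : x + T • w ∉ tsupport h := by
    intro hmem
    have h3 : ‖x + T • w‖ ≤ R := by simpa using hR hmem
    have h4 : ‖T • w‖ - ‖x‖ ≤ ‖x + T • w‖ := by
      have := norm_sub_norm_le (T • w) (-x)
      simpa [sub_eq_add_neg, add_comm] using this
    have h5 : ‖T • w‖ = T * ‖w‖ := by
      rw [norm_smul, Real.norm_eq_abs, abs_of_pos hTpos]
    have h6 : T * ‖w‖ = max R 0 + ‖x‖ + 1 := by
      rw [hT, div_mul_cancel₀ _ (ne_of_gt hwpos)]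
    have h7 : R ≤ max R 0 := le_max_left _ _
    rw [h5, h6] at h4
    linarith
  have h8 : φ T = 0 := image_eq_zero_of_notMem_tsupport (f := h) hout
  have h9 : h x = φ 0 := by simp [hφ]
  rw [h9, hconst 0 T, h8]

lemma Dlist_ne_zero (L : List (EuclideanSpace ℝ (Fin d))) (hL : ∀ w ∈ L, w ≠ 0)
    (g : SchwartzMap (EuclideanSpace ℝ (Fin d)) ℂ) (hg : HasCompactSupport ⇑g)
    (h : ∀ x, Dlist L g x = 0) : ∀ x, g x = 0 := by
  induction L with
  | nil => exact h
  | cons w L ih =>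
    have hcsL : HasCompactSupport ⇑(Dlist L g) :=
      hg.of_isClosed_subset isClosed_closure (tsupport_Dlist L g)
    apply ih (fun v hv => hL v (List.mem_cons_of_mem w hv))
    apply eq_zero_of_fderiv_dir (Dlist L g).differentiable hcsL
      (hL w (List.mem_cons_self))
    intro x
    have := h x
    rwa [Dlist_cons, SchwartzMap.lineDerivOp_apply_eq_fderiv] at this

end RadonAux

open RadonAux in
/-- for `d ≥ 2`, a finite `Q ⊂ S^{d−1}` and `ε > 0`, there is a Schwartz
function `f` supported in `B_ε(0)` with `‖f‖₂ = 1` whose Fourier transform vanishes on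
every line `ℝu`, `u ∈ Q` (equivalently, `R_u(f) ≡ 0` for every `u ∈ Q`). -/
theorem schwartz_vanishing_radon_directions {d : ℕ} (hd : 2 ≤ d)
    (Q : Set (EuclideanSpace ℝ (Fin d))) (hQfin : Q.Finite)
    (hQsphere : ∀ u ∈ Q, ‖u‖ = 1) (ε : ℝ) (hε : 0 < ε) :
    ∃ f : SchwartzMap (EuclideanSpace ℝ (Fin d)) ℂ,
      Function.support ⇑f ⊆ Metric.ball (0 : EuclideanSpace ℝ (Fin d)) ε ∧
      (∫ x : EuclideanSpace ℝ (Fin d), ‖f x‖ ^ 2) = 1 ∧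
      ∀ u ∈ Q, ∀ γ : ℝ, fourierT (⇑f) (γ • u) = 0 := by
  classical
  -- construct a smooth bump `g` supported in `closedBall 0 (ε/2)` with `g 0 = 1`
  set φ : ContDiffBump (0 : EuclideanSpace ℝ (Fin d)) :=
    ⟨ε / 4, ε / 2, by positivity, by linarith⟩ with hφdef
  have hφsmooth : ContDiff ℝ ((⊤ : ℕ∞)) (fun x : EuclideanSpace ℝ (Fin d) => ((φ x : ℝ) : ℂ)) :=
    Complex.ofRealCLM.contDiff.comp φ.contDiff
  have hφcs : HasCompactSupport (fun x : EuclideanSpace ℝ (Fin d) => ((φ x : ℝ) : ℂ)) :=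
    φ.hasCompactSupport.comp_left (g := fun r : ℝ => (r : ℂ)) Complex.ofReal_zero
  set g : SchwartzMap (EuclideanSpace ℝ (Fin d)) ℂ := ofCS _ hφsmooth hφcs with hgdef
  have hgcs : HasCompactSupport ⇑g := hφcs
  have hg0 : g 0 ≠ 0 := by
    have h1 : φ 0 = 1 := φ.one_of_mem_closedBall (by simp [hφdef]; positivity)
    simp [hgdef, ofCS_apply, h1]
  have hgsupp : tsupport ⇑g ⊆ Metric.closedBall 0 (ε / 2) := by
    have : tsupport (fun x : EuclideanSpace ℝ (Fin d) => ((φ x : ℝ) : ℂ)) ⊆ tsupport φ :=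
      closure_minimal (fun x hx => by
        simp only [Function.mem_support, ne_eq, Complex.ofReal_eq_zero] at hx
        exact subset_closure hx) isClosed_closure
    rw [φ.tsupport_eq] at this
    exact this
  -- choose orthogonal directions
  have hexists : ∀ u : EuclideanSpace ℝ (Fin d),
      ∃ w : EuclideanSpace ℝ (Fin d), u ∈ Q → (w ≠ 0 ∧ (inner ℝ u w : ℝ) = 0) := by
    intro u
    by_cases hu : u ∈ Q
    · have hu0 : u ≠ 0 := by
        intro h0
        have := hQsphere u hu
        rw [h0] at this
        simp at this
      have hbot : (ℝ ∙ u)ᗮ ≠ ⊥ := by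
        intro hb
        have htop : (ℝ ∙ u) = ⊤ := Submodule.orthogonal_eq_bot_iff.mp hb
        have h1 : Module.finrank ℝ (EuclideanSpace ℝ (Fin d)) = 1 := by
          conv_lhs => rw [← finrank_top ℝ (EuclideanSpace ℝ (Fin d)), ← htop]
          exact finrank_span_singleton hu0
        rw [finrank_euclideanSpace_fin] at h1
        omega
      obtain ⟨w, hwmem, hw0⟩ := Submodule.exists_mem_ne_zero_of_ne_bot hbot
      exact ⟨w, fun _ => ⟨hw0, (Submodule.mem_orthogonal _ w).mp hwmem u
        (Submodule.mem_span_singleton_self u)⟩⟩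
    · exact ⟨0, fun h => absurd h hu⟩
  choose W hW using hexists
  set L : List (EuclideanSpace ℝ (Fin d)) := hQfin.toFinset.toList.map W with hLdef
  have hLmem : ∀ u ∈ Q, W u ∈ L := by
    intro u hu
    exact List.mem_map_of_mem (f := W) (by rwa [Finset.mem_toList, hQfin.mem_toFinset])
  have hLne : ∀ w ∈ L, w ≠ 0 := by
    intro w hw
    obtain ⟨u, hu, rfl⟩ := List.mem_map.mp hw
    rw [Finset.mem_toList, hQfin.mem_toFinset] at hu
    exact (hW u hu).1
  set f₀ : SchwartzMap (EuclideanSpace ℝ (Fin d)) ℂ := Dlist L g with hf₀def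
  have hf₀ts : tsupport ⇑f₀ ⊆ Metric.closedBall 0 (ε / 2) := (tsupport_Dlist L g).trans hgsupp
  have hf₀cs : HasCompactSupport ⇑f₀ :=
    hgcs.of_isClosed_subset isClosed_closure (tsupport_Dlist L g)
  have hf₀ne : ∃ x, f₀ x ≠ 0 := by
    by_contra hcon
    push_neg at hcon
    exact hg0 (Dlist_ne_zero L hLne g hgcs hcon 0)
  obtain ⟨x₀, hx₀⟩ := hf₀ne
  -- the Fourier transform of `f₀` vanishes on the lines `ℝu`
  have hf₀four : ∀ u ∈ Q, ∀ γ : ℝ, 𝓕 (⇑f₀) (γ • u) = 0 := by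
    intro u hu γ
    apply fourier_Dlist_zero
    refine ⟨W u, hLmem u hu, ?_⟩
    rw [real_inner_smul_left, (hW u hu).2, mul_zero]
  -- normalization
  have hint : Integrable (fun x => ‖f₀ x‖ ^ 2) volume := by
    have hcs2 : HasCompactSupport (fun x => ‖f₀ x‖ ^ 2) :=
      hf₀cs.comp_left (g := fun z : ℂ => ‖z‖ ^ 2) (by simp)
    exact ((f₀.continuous.norm.pow 2)).integrable_of_hasCompactSupport hcs2
  have hcpos : 0 < ∫ x, ‖f₀ x‖ ^ 2 := by
    rw [integral_pos_iff_support_of_nonneg (fun x => by positivity) hint]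
    have hsupp_eq : (Function.support fun x => ‖f₀ x‖ ^ 2) = Function.support ⇑f₀ := by
      ext x
      simp [Function.mem_support, pow_eq_zero_iff]
    rw [hsupp_eq]
    have hopen : IsOpen (Function.support ⇑f₀) := by
      rw [Function.support_eq_preimage]
      exact isOpen_compl_singleton.preimage f₀.continuous
    exact hopen.measure_pos volume ⟨x₀, hx₀⟩
  set c : ℝ := ∫ x, ‖f₀ x‖ ^ 2 with hcdef
  set a : ℝ := (Real.sqrt c)⁻¹ with hadef
  have hapos : 0 < a := by
    rw [hadef]
    exact inv_pos.mpr (Real.sqrt_pos.mpr hcpos)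
  have ha2 : a ^ 2 = c⁻¹ := by
    rw [hadef, inv_pow, Real.sq_sqrt hcpos.le]
  refine ⟨a • f₀, ?_, ?_, ?_⟩
  · -- support
    intro x hx
    have hx' : x ∈ Function.support ⇑f₀ := by
      simp only [Function.mem_support, SchwartzMap.smul_apply] at hx ⊢
      intro h0
      exact hx (by rw [h0, smul_zero])
    have : x ∈ tsupport ⇑f₀ := subset_closure hx'
    have := hf₀ts this
    have hd2 : ε / 2 < ε := by linarith
    exact Metric.closedBall_subset_ball hd2 this
  · -- L² norm
    have heq : (fun x => ‖(a • f₀) x‖ ^ 2) = fun x => a ^ 2 * ‖f₀ x‖ ^ 2 := by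
      ext x
      simp only [SchwartzMap.smul_apply, norm_smul, Real.norm_eq_abs, abs_of_pos hapos,
        mul_pow]
    rw [heq,
      show (fun x => a ^ 2 * ‖f₀ x‖ ^ 2) = fun x => a ^ 2 • ‖f₀ x‖ ^ 2 from rfl,
      integral_smul, smul_eq_mul, ← hcdef, ha2, inv_mul_cancel₀ (ne_of_gt hcpos)]
  · -- vanishing Fourier transform
    intro u hu γ
    have hsm : fourierT (⇑(a • f₀)) (γ • u) = a • fourierT (⇑f₀) (γ • u) := by
      rw [fourierT, fourierT, ← integral_smul]
      congr 1
      ext x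
      simp only [SchwartzMap.smul_apply]
      rw [smul_mul_assoc]
    rw [hsm, fourierT_eq, hf₀four u hu γ, smul_zero]

end
end
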